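/- If dim H₂ > 1 and the algebra of the second factor is maximally correlated with the algebra of the first factor in a unit vector v ∈ H₁ ⊗ H₂, then v is not a product vector: there do not exist x ∈ H₁ and y ∈ H₂ with v = x ⊗ y. -/

import Mathlib

open scoped InnerProductSpace

noncomputable section

/-- The (completed) Hilbert tensor product of two complex Hilbert spaces `H₁`, `H₂`,
presented as a Hilbert space `H` together with a bilinear map `tmul` (elementary tensors)
whose inner products multiply, whose elementary tensors span a dense subspace, and together
with the tensor product `map A B = A ⊗ B` of bounded operators. -/
structure HilbertTensor (H₁ H₂ H : Type*)
    [NormedAddCommGroup H₁] [InnerProductSpace ℂ H₁] [CompleteSpace H₁]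
    [NormedAddCommGroup H₂] [InnerProductSpace ℂ H₂] [CompleteSpace H₂]
    [NormedAddCommGroup H] [InnerProductSpace ℂ H] [CompleteSpace H] where
  tmul : H₁ →ₗ[ℂ] H₂ →ₗ[ℂ] H
  inner_tmul : ∀ x₁ y₁ x₂ y₂, ⟪tmul x₁ y₁, tmul x₂ y₂⟫_ℂ = ⟪x₁, x₂⟫_ℂ * ⟪y₁, y₂⟫_ℂ
  dense_span : Dense (↑(Submodule.span ℂ {z : H | ∃ x y, z = tmul x y}) : Set H)
  map : (H₁ →L[ℂ] H₁) → (H₂ →L[ℂ] H₂) → (H →L[ℂ] H)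
  map_tmul : ∀ A B x y, map A B (tmul x y) = tmul (A x) (B y)

variable {H₁ H₂ H : Type*}
  [NormedAddCommGroup H₁] [InnerProductSpace ℂ H₁] [CompleteSpace H₁]
  [NormedAddCommGroup H₂] [InnerProductSpace ℂ H₂] [CompleteSpace H₂]
  [NormedAddCommGroup H] [InnerProductSpace ℂ H] [CompleteSpace H]

/-- `v` is cyclic for the first factor: `{(A ⊗ I) v : A bounded on H₁}` is dense in `H`. -/
def HilbertTensor.CyclicFst (T : HilbertTensor H₁ H₂ H) (v : H) : Prop :=
  Dense (Set.range fun A : H₁ →L[ℂ] H₁ => T.map A 1 v)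

/-- An orthogonal projection on a Hilbert space: a self-adjoint idempotent bounded operator. -/
def IsONProj {E : Type*} [NormedAddCommGroup E] [InnerProductSpace ℂ E] [CompleteSpace E]
    (P : E →L[ℂ] E) : Prop :=
  IsSelfAdjoint P ∧ P ∘L P = P

/-- The algebra of the second factor is maximally correlated with the algebra of the first
factor in the state `v`. -/
def HilbertTensor.MaxCorrSndFst (T : HilbertTensor H₁ H₂ H) (v : H) : Prop :=
  ∀ P' : H₂ →L[ℂ] H₂, IsONProj P' → P' ≠ 0 → ∀ ε : ℝ, 0 < ε →
    ∃ P : H₁ →L[ℂ] H₁, IsONProj P ∧ P ≠ 0 ∧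
      0 < (⟪v, T.map P 1 v⟫_ℂ).re ∧
      (1 - ε) * (⟪v, T.map P 1 v⟫_ℂ).re ≤ (⟪v, T.map P P' v⟫_ℂ).re

/-- The orthogonal projection onto the span of a vector, as an operator `E →L[ℂ] E`. -/
def projSpan {E : Type*} [NormedAddCommGroup E] [InnerProductSpace ℂ E] [CompleteSpace E]
    (w : E) : E →L[ℂ] E :=
  (ℂ ∙ w).subtypeL ∘L Submodule.orthogonalProjection (ℂ ∙ w)

/-- if `dim H₂ > 1` and the algebra of the second factor is maximally correlated
with the algebra of the first factor in the unit vector `v ∈ H₁ ⊗ H₂`, then `v` is not a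
product vector: there are no `x ∈ H₁`, `y ∈ H₂` with `v = x ⊗ y`. -/
theorem maxCorr_imp_not_product
    [TopologicalSpace.SeparableSpace H₁] [TopologicalSpace.SeparableSpace H₂]
    (h₁ : 1 < Module.rank ℂ H₁) (h₂ : 1 < Module.rank ℂ H₂)
    (T : HilbertTensor H₁ H₂ H) (v : H) (hv : ‖v‖ = 1)
    (hmc : T.MaxCorrSndFst v) :
    ¬ ∃ (x : H₁) (y : H₂), v = T.tmul x y := by
  rintro ⟨x, y, rfl⟩
  -- find a nonzero vector orthogonal to y
  obtain ⟨y', hy'0, hyy'⟩ : ∃ y' : H₂, y' ≠ 0 ∧ ⟪y, y'⟫_ℂ = 0 := by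
    by_contra h
    push_neg at h
    have hbot : (ℂ ∙ y)ᗮ = ⊥ := by
      rw [Submodule.eq_bot_iff]
      intro z hz
      by_contra hz0
      exact h z hz0 (Submodule.mem_orthogonal_singleton_iff_inner_right.mp hz)
    have htop : (ℂ ∙ y) = ⊤ := Submodule.orthogonal_eq_bot_iff.mp hbot
    have hr : Module.rank ℂ H₂ ≤ 1 := by
      have h1 : Module.rank ℂ ↥(Submodule.span ℂ ({y} : Set H₂)) ≤ 1 := by
        simpa using rank_span_le (R := ℂ) ({y} : Set H₂)
      have h2 : Module.rank ℂ ↥(⊤ : Submodule ℂ H₂) = Module.rank ℂ H₂ := rank_top ℂ H₂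
      rw [← h2, ← htop]
      exact h1
    exact absurd h₂ (not_lt.mpr hr)
  set P' : H₂ →L[ℂ] H₂ := projSpan y' with hP'def
  have hP'on : IsONProj P' := by
    refine ⟨isSelfAdjoint_starProjection _, ?_⟩
    ext z
    simp [hP'def, projSpan, Submodule.starProjection_eq_self_iff]
  have hP'y' : P' y' = y' := by
    have : ((Submodule.orthogonalProjection (ℂ ∙ y') y' : ↥(ℂ ∙ y')) : H₂) = y' :=
      Submodule.starProjection_eq_self_iff.mpr (Submodule.mem_span_singleton_self y')
    simpa [hP'def, projSpan] using this
  have hP'ne : P' ≠ 0 := by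
    intro h0
    apply hy'0
    rw [← hP'y', h0]
    simp
  have hP'y : P' y = 0 := by
    have h0 : ⟪y', y⟫_ℂ = 0 := by rwa [inner_eq_zero_symm] at hyy'
    simp [hP'def, projSpan, Submodule.starProjection_singleton, h0]
  obtain ⟨P, hPon, hPne, hpos, hle⟩ := hmc P' hP'on hP'ne (1/2) (by norm_num)
  have hzero : (⟪T.tmul x y, T.map P P' (T.tmul x y)⟫_ℂ).re = 0 := by
    rw [T.map_tmul, T.inner_tmul, hP'y]
    simp
  rw [hzero] at hle
  linarith

end
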